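/- Let Q^A, Q^B : ℕ → ℕ be non-increasing sequences with Q^A(i) ≤ Q^B(i) ≤ N for all i ≥ 1, and fix k ∈ {1,...,N}. Define the removal update: for Π ∈ {A,B}, set Q̃^Π(i) = Q^Π(i) - 1 if i = I_Π(k) ≥ 1 and Q̃^Π(i) = Q^Π(i) otherwise, where I_Π(k) = sup {i : Q^Π(i) ≥ N - k + 1} (0 if empty). Then Q̃^A(i) ≤ Q̃^B(i) for all i ≥ 1. -/

import Mathlib

/-- `Ifun N Q c` is the height of the `c`-th shortest stack:
`sup {i ≥ 1 : Q i ≥ N - c + 1}`, with value `0` if the set is empty. -/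
noncomputable def Ifun (N : ℕ) (Q : ℕ → ℕ) (c : ℕ) : ℕ :=
  sSup {i | 1 ≤ i ∧ N - c + 1 ≤ Q i}

/-- Removal update: remove an item from the `k`-th shortest stack, i.e.
decrement `Q` at index `I(k)` when `I(k) ≥ 1`. -/
noncomputable def remQ (N : ℕ) (Q : ℕ → ℕ) (k : ℕ) : ℕ → ℕ :=
  fun i => if i = Ifun N Q k ∧ 1 ≤ Ifun N Q k then Q i - 1 else Q i

/-- Removing an item from the `k`-th shortest stack in both ensembles preserves
the componentwise ordering of the occupancy vectors. -/
theorem stmt_3 (N : ℕ) (QA QB : ℕ → ℕ)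
    (hmA : ∀ i j, i ≤ j → QA j ≤ QA i)
    (hmB : ∀ i j, i ≤ j → QB j ≤ QB i)
    (hAB : ∀ i, QA i ≤ QB i)
    (hbdB : ∀ i, QB i ≤ N)
    (hfinA : ∃ b, QA (b + 1) = 0)
    (hfinB : ∃ b, QB (b + 1) = 0)
    (k : ℕ) (hk1 : 1 ≤ k) (hkN : k ≤ N) :
    ∀ i, 1 ≤ i → remQ N QA k i ≤ remQ N QB k i := by
  obtain ⟨bA, hbA⟩ := hfinA
  obtain ⟨bB, hbB⟩ := hfinB
  have hbddA : BddAbove {j | 1 ≤ j ∧ N - k + 1 ≤ QA j} := by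
    refine ⟨bA, fun j hj => ?_⟩
    by_contra h
    push_neg at h
    have : QA j ≤ QA (bA + 1) := hmA _ _ h
    have := hj.2
    omega
  have hbddB : BddAbove {j | 1 ≤ j ∧ N - k + 1 ≤ QB j} := by
    refine ⟨bB, fun j hj => ?_⟩
    by_contra h
    push_neg at h
    have : QB j ≤ QB (bB + 1) := hmB _ _ h
    have := hj.2
    omega
  have hIAB : Ifun N QA k ≤ Ifun N QB k := by
    rcases Set.eq_empty_or_nonempty {j | 1 ≤ j ∧ N - k + 1 ≤ QA j} with he | hne
    · simp only [Ifun, he]; simp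
    · exact csSup_le_csSup hbddB hne (fun x hx => ⟨hx.1, le_trans hx.2 (hAB x)⟩)
  intro i hi
  unfold remQ
  split_ifs with h1 h2 h2
  · exact Nat.sub_le_sub_right (hAB i) 1
  · exact le_trans (Nat.sub_le _ _) (hAB i)
  · obtain ⟨hiB, hIB1⟩ := h2
    have hne : {j | 1 ≤ j ∧ N - k + 1 ≤ QB j}.Nonempty := by
      by_contra hc
      rw [Set.not_nonempty_iff_eq_empty] at hc
      have h0 : Ifun N QB k = 0 := by simp only [Ifun, hc]; simp
      omega
    have hmem := Nat.sSup_mem hne hbddB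
    have htQB : N - k + 1 ≤ QB i := by rw [hiB]; exact hmem.2
    have hlt : QA i < N - k + 1 := by
      by_contra hc
      push_neg at hc
      have hle : i ≤ Ifun N QA k := le_csSup hbddA ⟨hi, hc⟩
      omega
    omega
  · exact hAB i
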